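/- arXiv:2401.05096 — 3 statements merged into one kernel-verified Lean document; each statement's English description precedes it below -/
import Mathlib

section
/- Let A be an n×n lower triangular complex matrix with all diagonal entries equal to 1 and all subdiagonal entries of absolute value at most 1. Then the inverse B = A⁻¹ is lower triangular with diagonal entries 1, and for j > k the entry B_{j,k} satisfies |B_{j,k}| ≤ 2^{j−k−1}. -/
theorem stmt1 (n : ℕ) (A : Matrix (Fin n) (Fin n) ℂ)
    (hlt : ∀ j k : Fin n, (j : ℕ) < (k : ℕ) → A j k = 0)
    (hdiag : ∀ j : Fin n, A j j = 1)
    (hsub : ∀ j k : Fin n, (k : ℕ) < (j : ℕ) → ‖A j k‖ ≤ 1) :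
    (∀ j k : Fin n, (j : ℕ) < (k : ℕ) → A⁻¹ j k = 0) ∧
    (∀ j : Fin n, A⁻¹ j j = 1) ∧
    (∀ j k : Fin n, (k : ℕ) < (j : ℕ) →
      ‖A⁻¹ j k‖ ≤ 2 ^ ((j : ℕ) - (k : ℕ) - 1)) := by
  classical
  -- A is block triangular w.r.t. toDual (i.e. lower triangular)
  have hBT : A.BlockTriangular OrderDual.toDual := by
    intro i j h
    exact hlt i j h
  have hdet : A.det = 1 := by
    rw [Matrix.det_of_lowerTriangular A hBT]
    simp [hdiag]
  have hdetU : IsUnit A.det := by rw [hdet]; exact isUnit_one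
  haveI : Invertible A := A.invertibleOfIsUnitDet hdetU
  have hinvBT : (A⁻¹).BlockTriangular OrderDual.toDual :=
    Matrix.blockTriangular_inv_of_blockTriangular hBT
  -- Part 1: A⁻¹ is lower triangular
  have part1 : ∀ j k : Fin n, (j : ℕ) < (k : ℕ) → A⁻¹ j k = 0 := by
    intro j k h
    exact hinvBT h
  have hmul : A * A⁻¹ = 1 := Matrix.mul_nonsing_inv A hdetU
  -- Part 2: diagonal is 1
  have part2 : ∀ j : Fin n, A⁻¹ j j = 1 := by
    intro j
    have h1 : (A * A⁻¹) j j = 1 := by rw [hmul]; simp [Matrix.one_apply]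
    rw [Matrix.mul_apply] at h1
    rw [Finset.sum_eq_single j] at h1
    · rw [hdiag j, one_mul] at h1; exact h1
    · intro i _ hi
      rcases lt_or_gt_of_ne (fun h => hi (Fin.ext h) : (i : ℕ) ≠ (j : ℕ)) with h | h
      · rw [part1 i j h, mul_zero]
      · rw [hlt j i h, zero_mul]
    · intro h; exact absurd (Finset.mem_univ j) h
  refine ⟨part1, part2, ?_⟩
  -- Part 3: the bound
  intro j k hkj
  -- the key recurrence
  have hkey : ∀ j' : Fin n, (k : ℕ) < (j' : ℕ) →
      A⁻¹ j' k = -∑ i ∈ Finset.univ.erase j', A j' i * A⁻¹ i k := by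
    intro j' hk
    have h0 : (A * A⁻¹) j' k = 0 := by
      rw [hmul, Matrix.one_apply_ne]
      exact fun h => absurd (congrArg Fin.val h) (by omega)
    rw [Matrix.mul_apply, ← Finset.add_sum_erase _ _ (Finset.mem_univ j'),
      hdiag j', one_mul] at h0
    exact eq_neg_of_add_eq_zero_left h0
  -- f i = |A⁻¹ i k| as a function of natural numbers
  set f : ℕ → ℝ := fun i => if h : i < n then ‖A⁻¹ ⟨i, h⟩ k‖ else 0 with hf
  have hf_nonneg : ∀ i, 0 ≤ f i := by
    intro i; simp only [hf]
    split <;> [exact norm_nonneg _; exact le_rfl]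
  -- step bound : |A⁻¹ j' k| ≤ ∑_{k ≤ i < j'} f i
  have hstep : ∀ j' : Fin n, (k : ℕ) < (j' : ℕ) →
      ‖A⁻¹ j' k‖ ≤ ∑ i ∈ Finset.Ico (k : ℕ) (j' : ℕ), f i := by
    intro j' hk
    rw [hkey j' hk, norm_neg]
    calc ‖∑ i ∈ Finset.univ.erase j', A j' i * A⁻¹ i k‖
        ≤ ∑ i ∈ Finset.univ.erase j', ‖A j' i * A⁻¹ i k‖ :=
          norm_sum_le _ _
      _ = ∑ i ∈ Finset.univ.filter
            (fun i : Fin n => (k : ℕ) ≤ (i : ℕ) ∧ (i : ℕ) < (j' : ℕ)),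
            ‖A j' i * A⁻¹ i k‖ := by
          refine (Finset.sum_subset ?_ ?_).symm
          · intro i hi
            simp only [Finset.mem_filter, Finset.mem_univ, true_and] at hi
            exact Finset.mem_erase.2 ⟨fun h => absurd (congrArg Fin.val h) (by omega),
              Finset.mem_univ i⟩
          · intro i hmem hi
            simp only [Finset.mem_filter, Finset.mem_univ, true_and, not_and, not_lt] at hi
            by_cases h1 : (k : ℕ) ≤ (i : ℕ)
            · have h2 := hi h1
              rcases eq_or_lt_of_le h2 with h3 | h3
              · exact absurd (Fin.ext h3.symm) (Finset.mem_erase.1 hmem).1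
              · rw [hlt j' i h3, zero_mul, norm_zero]
            · rw [part1 i k (by omega), mul_zero, norm_zero]
      _ ≤ ∑ i ∈ Finset.univ.filter
            (fun i : Fin n => (k : ℕ) ≤ (i : ℕ) ∧ (i : ℕ) < (j' : ℕ)),
            ‖A⁻¹ i k‖ := by
          refine Finset.sum_le_sum ?_
          intro i hi
          simp only [Finset.mem_filter, Finset.mem_univ, true_and] at hi
          rw [norm_mul]
          calc ‖A j' i‖ * ‖A⁻¹ i k‖
              ≤ 1 * ‖A⁻¹ i k‖ :=
                mul_le_mul_of_nonneg_right (hsub j' i hi.2) (norm_nonneg _)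
            _ = ‖A⁻¹ i k‖ := one_mul _
      _ = ∑ i ∈ Finset.Ico (k : ℕ) (j' : ℕ), f i := by
          refine Finset.sum_bij' (fun (i : Fin n) _ => (i : ℕ))
            (fun (i : ℕ) hi => (⟨i, by
              simp only [Finset.mem_Ico] at hi
              exact lt_trans hi.2 j'.isLt⟩ : Fin n)) ?_ ?_ ?_ ?_ ?_
          · intro a ha
            simp only [Finset.mem_filter, Finset.mem_univ, true_and] at ha
            exact Finset.mem_Ico.2 ha
          · intro a ha
            simp only [Finset.mem_Ico] at ha
            simp only [Finset.mem_filter, Finset.mem_univ, true_and]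
            exact ha
          · intro a _; rfl
          · intro a _; rfl
          · intro a ha
            simp only [Finset.mem_filter, Finset.mem_univ, true_and] at ha
            have hlt' : (a : ℕ) < n := a.isLt
            simp only [hf, dif_pos hlt']
  -- cumulative sums double
  have hS : ∀ m : ℕ, (k : ℕ) ≤ m → ∑ i ∈ Finset.Icc (k : ℕ) m, f i ≤ 2 ^ (m - (k : ℕ)) := by
    intro m hm
    induction m, hm using Nat.le_induction with
    | base =>
      rw [Finset.Icc_self, Finset.sum_singleton, Nat.sub_self, pow_zero]
      have : f (k : ℕ) = 1 := by
        simp only [hf, dif_pos k.isLt]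
        have : (⟨(k : ℕ), k.isLt⟩ : Fin n) = k := Fin.ext rfl
        rw [this, part2 k, norm_one]
      rw [this]
    | succ m hm ih =>
      have hins : Finset.Icc (k : ℕ) (m + 1) = insert (m + 1) (Finset.Icc (k : ℕ) m) := by
        ext x
        simp only [Finset.mem_Icc, Finset.mem_insert]
        omega
      rw [hins, Finset.sum_insert (by simp)]
      have hfm : f (m + 1) ≤ ∑ i ∈ Finset.Icc (k : ℕ) m, f i := by
        by_cases h : m + 1 < n
        · have hj : (k : ℕ) < ((⟨m + 1, h⟩ : Fin n) : ℕ) := by simp; omega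
          have := hstep ⟨m + 1, h⟩ hj
          simp only [hf, dif_pos h]
          calc ‖A⁻¹ ⟨m + 1, h⟩ k‖
              ≤ ∑ i ∈ Finset.Ico (k : ℕ) (m + 1), f i := this
            _ = ∑ i ∈ Finset.Icc (k : ℕ) m, f i := by rw [Finset.Ico_add_one_right_eq_Icc]
        · simp only [hf, dif_neg h]
          exact Finset.sum_nonneg fun i _ => hf_nonneg i
      have h2 : (m + 1) - (k : ℕ) = (m - (k : ℕ)) + 1 := by omega
      rw [h2, pow_succ]
      calc f (m + 1) + ∑ i ∈ Finset.Icc (k : ℕ) m, f i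
          ≤ ∑ i ∈ Finset.Icc (k : ℕ) m, f i + ∑ i ∈ Finset.Icc (k : ℕ) m, f i := by
            linarith
        _ = (∑ i ∈ Finset.Icc (k : ℕ) m, f i) * 2 := by ring
        _ ≤ 2 ^ (m - (k : ℕ)) * 2 := by linarith
  -- conclude
  have h1 : (j : ℕ) - 1 ≥ (k : ℕ) := by omega
  calc ‖A⁻¹ j k‖
      ≤ ∑ i ∈ Finset.Ico (k : ℕ) (j : ℕ), f i := hstep j hkj
    _ = ∑ i ∈ Finset.Icc (k : ℕ) ((j : ℕ) - 1), f i := by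
        rw [← Finset.Ico_add_one_right_eq_Icc,
          Nat.sub_add_cancel (by omega : 1 ≤ (j : ℕ))]
    _ ≤ 2 ^ ((j : ℕ) - 1 - (k : ℕ)) := hS _ h1
    _ = 2 ^ ((j : ℕ) - (k : ℕ) - 1) := by rw [show (j : ℕ) - 1 - (k : ℕ) = (j : ℕ) - (k : ℕ) - 1 by omega]
end

section
/- Let A be an n×n lower triangular complex matrix with diagonal entries 1 and subdiagonal entries of absolute value at most 1. If w = A⁻¹ Z for Z ∈ ℂⁿ, then |w₁| + ⋯ + |wₙ| ≤ Σ_{j=1}^n 2^{n−j} |Z_j|. -/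
open scoped BigOperators
open Finset

lemma aux_sum (n : ℕ) (a b : Fin n → ℝ) (ha : ∀ j, 0 ≤ a j) (hb : ∀ j, 0 ≤ b j)
    (h : ∀ j : Fin n, a j ≤ b j + ∑ k ∈ univ.filter (fun k : Fin n => (k:ℕ) < (j:ℕ)), a k) :
    ∀ m : ℕ, ∑ j ∈ univ.filter (fun j : Fin n => (j:ℕ) < m), a j
      ≤ ∑ j ∈ univ.filter (fun j : Fin n => (j:ℕ) < m), (2:ℝ) ^ (m - 1 - (j:ℕ)) * b j := by
  intro m
  induction m with
  | zero => simp
  | succ m ih =>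
    by_cases hm : m < n
    · have hsplit : (univ.filter (fun j : Fin n => (j:ℕ) < m + 1))
          = insert ⟨m, hm⟩ (univ.filter (fun j : Fin n => (j:ℕ) < m)) := by
        ext j
        simp only [mem_filter, mem_univ, true_and, mem_insert, Fin.ext_iff]
        omega
      have hnotmem : (⟨m, hm⟩ : Fin n) ∉ univ.filter (fun j : Fin n => (j:ℕ) < m) := by simp
      rw [hsplit, Finset.sum_insert hnotmem, Finset.sum_insert hnotmem]
      have h1 := h ⟨m, hm⟩
      have h2 : ∑ j ∈ univ.filter (fun j : Fin n => (j:ℕ) < m), (2:ℝ) ^ (m - 1 - (j:ℕ)) * b j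
          + ∑ j ∈ univ.filter (fun j : Fin n => (j:ℕ) < m), (2:ℝ) ^ (m - 1 - (j:ℕ)) * b j
          = ∑ j ∈ univ.filter (fun j : Fin n => (j:ℕ) < m), (2:ℝ) ^ (m + 1 - 1 - (j:ℕ)) * b j := by
        rw [← Finset.sum_add_distrib]
        apply Finset.sum_congr rfl
        intro j hj
        simp only [mem_filter, mem_univ, true_and] at hj
        have : m + 1 - 1 - (j:ℕ) = (m - 1 - (j:ℕ)) + 1 := by omega
        rw [this, pow_succ]
        ring
      calc a ⟨m, hm⟩ + ∑ j ∈ univ.filter (fun j : Fin n => (j:ℕ) < m), a j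
          ≤ b ⟨m, hm⟩ + (∑ j ∈ univ.filter (fun j : Fin n => (j:ℕ) < m), a j
              + ∑ j ∈ univ.filter (fun j : Fin n => (j:ℕ) < m), a j) := by
            simpa using add_le_add h1 (le_refl _) |>.trans (by simp [add_assoc, add_comm, add_left_comm])
        _ ≤ b ⟨m, hm⟩ + ∑ j ∈ univ.filter (fun j : Fin n => (j:ℕ) < m), (2:ℝ) ^ (m + 1 - 1 - (j:ℕ)) * b j := by
            rw [← h2]; exact add_le_add (le_refl _) (add_le_add ih ih)
        _ = (2:ℝ) ^ (m + 1 - 1 - (m:ℕ)) * b ⟨m, hm⟩ + _ := by simp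
    · have heq : (univ.filter (fun j : Fin n => (j:ℕ) < m + 1))
          = (univ.filter (fun j : Fin n => (j:ℕ) < m)) := by
        ext j; simp only [mem_filter, mem_univ, true_and]
        have := j.isLt; omega
      rw [heq]
      refine ih.trans (Finset.sum_le_sum ?_)
      intro j hj
      have : (2:ℝ) ^ (m - 1 - (j:ℕ)) ≤ (2:ℝ) ^ (m + 1 - 1 - (j:ℕ)) := by
        apply pow_le_pow_right₀ (by norm_num); omega
      exact mul_le_mul_of_nonneg_right this (hb j)

theorem stmt2 (n : ℕ) (A : Matrix (Fin n) (Fin n) ℂ)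
    (hlt : ∀ j k : Fin n, (j : ℕ) < (k : ℕ) → A j k = 0)
    (hdiag : ∀ j : Fin n, A j j = 1)
    (hsub : ∀ j k : Fin n, (k : ℕ) < (j : ℕ) → ‖A j k‖ ≤ 1)
    (Z w : Fin n → ℂ) (hw : w = A⁻¹.mulVec Z) :
    ∑ j : Fin n, ‖w j‖
      ≤ ∑ j : Fin n, (2 : ℝ) ^ (n - 1 - (j : ℕ)) * ‖Z j‖ := by
  have hdet : A.det = 1 := by
    rw [Matrix.det_of_lowerTriangular A (fun i j hij => hlt i j hij)]
    simp [hdiag]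
  have hZ : A.mulVec w = Z := by
    rw [hw, Matrix.mulVec_mulVec, Matrix.mul_nonsing_inv A (by simp [hdet]),
      Matrix.one_mulVec]
  have key : ∀ j : Fin n, ‖w j‖ ≤ ‖Z j‖
      + ∑ k ∈ univ.filter (fun k : Fin n => (k:ℕ) < (j:ℕ)), ‖w k‖ := by
    intro j
    have hj : Z j = (∑ k ∈ univ.filter (fun k : Fin n => (k:ℕ) < (j:ℕ)), A j k * w k) + w j := by
      rw [← hZ]
      show ∑ k, A j k * w k = _
      rw [← Finset.sum_filter_add_sum_filter_not univ (fun k : Fin n => (k:ℕ) < (j:ℕ))]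
      congr 1
      rw [Finset.sum_eq_single j]
      · rw [hdiag]; ring
      · intro k hk hkj
        simp only [mem_filter, mem_univ, true_and, not_lt] at hk
        have : (j:ℕ) < (k:ℕ) := by
          rcases lt_or_eq_of_le hk with h | h
          · exact h
          · exact absurd (Fin.ext h.symm) hkj
        rw [hlt j k this]; ring
      · intro hjmem
        exact absurd (by simp) hjmem
    have : w j = Z j - ∑ k ∈ univ.filter (fun k : Fin n => (k:ℕ) < (j:ℕ)), A j k * w k := by
      rw [hj]; ring
    rw [this]
    refine (norm_sub_le _ _).trans (add_le_add (le_refl _) ?_)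
    refine (norm_sum_le _ _).trans (Finset.sum_le_sum ?_)
    intro k hk
    simp only [mem_filter, mem_univ, true_and] at hk
    rw [norm_mul]
    calc ‖A j k‖ * ‖w k‖
        ≤ 1 * ‖w k‖ :=
          mul_le_mul_of_nonneg_right (hsub j k hk) (norm_nonneg _)
      _ = ‖w k‖ := one_mul _
  have := aux_sum n (fun j => ‖w j‖) (fun j => ‖Z j‖)
    (fun j => norm_nonneg _) (fun j => norm_nonneg _) key n
  have huniv : (univ.filter (fun j : Fin n => (j:ℕ) < n)) = univ := by
    ext j; simp [j.isLt]
  rw [huniv] at this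
  exact this
end

section
/- Let A be an n×n lower triangular complex matrix with diagonal entries 1 and subdiagonal entries of absolute value at most 1, viewed as a linear map on ℂⁿ. Let Eₙ = {w ∈ ℂⁿ : |w₁|+⋯+|wₙ| < 1} and cₙ = √((4ⁿ−1)/3). Then the open Euclidean ball of radius 1/cₙ centered at 0 is contained in A(Eₙ). -/
open scoped BigOperators

lemma sum_bound_aux (n : ℕ) (u s : ℕ → ℝ)
    (hrec : ∀ j, j < n → u j ≤ s j + ∑ k ∈ Finset.range j, u k) :
    ∑ k ∈ Finset.range n, u k ≤ ∑ k ∈ Finset.range n, 2 ^ (n - 1 - k) * s k := by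
  induction n with
  | zero => simp
  | succ m ih =>
    have h1 : ∑ k ∈ Finset.range m, u k ≤ ∑ k ∈ Finset.range m, 2 ^ (m - 1 - k) * s k :=
      ih (fun j hj => hrec j (hj.trans (Nat.lt_succ_self m)))
    have h2 := hrec m (Nat.lt_succ_self m)
    rw [Finset.sum_range_succ]
    calc ∑ k ∈ Finset.range m, u k + u m
        ≤ 2 * ∑ k ∈ Finset.range m, u k + s m := by linarith
      _ ≤ 2 * ∑ k ∈ Finset.range m, 2 ^ (m - 1 - k) * s k + s m := by linarith
      _ = ∑ k ∈ Finset.range (m + 1), 2 ^ (m + 1 - 1 - k) * s k := by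
          rw [Finset.sum_range_succ, Finset.mul_sum]
          congr 1
          · refine Finset.sum_congr rfl fun k hk => ?_
            have hk' := Finset.mem_range.mp hk
            rw [← mul_assoc, ← pow_succ']
            congr 2
            omega
          · simp

theorem stmt3 (n : ℕ) (A : Matrix (Fin n) (Fin n) ℂ)
    (hlt : ∀ j k : Fin n, (j : ℕ) < (k : ℕ) → A j k = 0)
    (hdiag : ∀ j : Fin n, A j j = 1)
    (hsub : ∀ j k : Fin n, (k : ℕ) < (j : ℕ) → ‖A j k‖ ≤ 1) :
    Metric.ball (0 : EuclideanSpace ℂ (Fin n)) (1 / Real.sqrt ((4 ^ n - 1) / 3))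
      ⊆ (fun w : EuclideanSpace ℂ (Fin n) => (WithLp.toLp 2 (A.mulVec w) : EuclideanSpace ℂ (Fin n))) ''
        { w : EuclideanSpace ℂ (Fin n) | ∑ j : Fin n, ‖w j‖ < 1 } := by
  intro z hz
  rcases Nat.eq_zero_or_pos n with hn | hn
  · subst hn
    exact ⟨0, by simp, Subsingleton.elim _ _⟩
  -- setup
  have hz' : ‖z‖ < 1 / Real.sqrt ((4 ^ n - 1) / 3) := by
    simpa using mem_ball_zero_iff.mp hz
  have hge : (1 : ℝ) ≤ (4 ^ n - 1) / 3 := by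
    have : (4 : ℝ) ^ 1 ≤ 4 ^ n := pow_le_pow_right₀ (by norm_num) hn
    simp at this
    linarith
  have hc : 0 < Real.sqrt ((4 ^ n - 1) / 3) := Real.sqrt_pos.mpr (by linarith)
  -- invertibility
  have hbt : A.BlockTriangular OrderDual.toDual := fun i j h => hlt i j h
  have hdet : A.det = 1 := by
    rw [Matrix.det_of_lowerTriangular A hbt]
    simp [hdiag]
  set w : Fin n → ℂ := A⁻¹.mulVec z with hw
  have hAw : A.mulVec w = z := by
    rw [hw, Matrix.mulVec_mulVec, Matrix.mul_nonsing_inv A (by simp [hdet]),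
      Matrix.one_mulVec]
  -- the nat-indexed sequences
  set u : ℕ → ℝ := fun k => if h : k < n then ‖w ⟨k, h⟩‖ else 0 with hu
  set s : ℕ → ℝ := fun k => if h : k < n then ‖z ⟨k, h⟩‖ else 0 with hs
  have hu0 : ∀ k, 0 ≤ u k := by
    intro k; rw [hu]; dsimp only; split <;> positivity
  -- recursion inequality
  have hrec : ∀ j, j < n → u j ≤ s j + ∑ k ∈ Finset.range j, u k := by
    intro j hj
    set J : Fin n := ⟨j, hj⟩ with hJ
    have hz : ∑ k : Fin n, A J k * w k = z J := congrFun hAw J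
    have hsplit : ∑ k : Fin n, A J k * w k
        = (∑ k ∈ Finset.univ.filter (fun k : Fin n => (k : ℕ) < j), A J k * w k) + w J := by
      rw [← Finset.sum_filter_add_sum_filter_not Finset.univ (fun k : Fin n => (k : ℕ) < j)]
      congr 1
      rw [Finset.sum_eq_single J]
      · rw [hdiag, one_mul]
      · intro b hb hbJ
        simp only [Finset.mem_filter, not_lt] at hb
        have : (J : ℕ) < (b : ℕ) := by
          rcases lt_or_eq_of_le hb.2 with h | h
          · exact h
          · exact absurd (Fin.ext h.symm) hbJ
        rw [hlt J b this, zero_mul]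
      · intro hJmem
        simp at hJmem; exact absurd hJmem (lt_irrefl j)
    have hwJ : w J = z J - ∑ k ∈ Finset.univ.filter (fun k : Fin n => (k : ℕ) < j),
        A J k * w k := by
      rw [← hz, hsplit]; ring
    have hmap : (Finset.univ.filter (fun k : Fin n => (k : ℕ) < j)).map Fin.valEmbedding
        = Finset.range j := by
      ext a
      simp only [Finset.mem_map, Finset.mem_filter, Finset.mem_univ, true_and,
        Fin.valEmbedding_apply, Finset.mem_range]
      constructor
      · rintro ⟨b, hb, rfl⟩; exact hb
      · intro ha; exact ⟨⟨a, ha.trans hj⟩, ha, rfl⟩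
    have hsum_eq : ∑ k ∈ Finset.range j, u k
        = ∑ k ∈ Finset.univ.filter (fun k : Fin n => (k : ℕ) < j), ‖w k‖ := by
      rw [← hmap, Finset.sum_map]
      refine Finset.sum_congr rfl fun k _ => ?_
      rw [hu]; dsimp only [Fin.valEmbedding_apply]
      rw [dif_pos (show Fin.valEmbedding k < n from k.isLt)]; rfl
    have huj : u j = ‖w J‖ := by
      rw [hu]; dsimp only; rw [dif_pos hj]
    have hsj : s j = ‖z J‖ := by
      rw [hs]; dsimp only; rw [dif_pos hj]
    rw [huj, hsj, hsum_eq, hwJ]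
    calc ‖z J - ∑ k ∈ Finset.univ.filter (fun k : Fin n => (k : ℕ) < j), A J k * w k‖
        ≤ ‖z J‖
          + ‖∑ k ∈ Finset.univ.filter (fun k : Fin n => (k : ℕ) < j), A J k * w k‖ :=
          norm_sub_le _ _
      _ ≤ ‖z J‖
          + ∑ k ∈ Finset.univ.filter (fun k : Fin n => (k : ℕ) < j), ‖A J k * w k‖ :=
          add_le_add_right (norm_sum_le _ _) _
      _ ≤ ‖z J‖
          + ∑ k ∈ Finset.univ.filter (fun k : Fin n => (k : ℕ) < j), ‖w k‖ := by
          gcongr with k hk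
          rw [norm_mul]
          simp only [Finset.mem_filter] at hk
          calc ‖A J k‖ * ‖w k‖
              ≤ 1 * ‖w k‖ := by
                gcongr; exact hsub J k hk.2
            _ = ‖w k‖ := one_mul _
  -- total bound
  have htot : ∑ j : Fin n, ‖w j‖ ≤ ∑ k ∈ Finset.range n, 2 ^ (n - 1 - k) * s k := by
    have h1 : ∑ j : Fin n, ‖w j‖ = ∑ k ∈ Finset.range n, u k := by
      rw [Finset.sum_range fun k => u k]
      refine Finset.sum_congr rfl fun k _ => ?_
      rw [hu]; dsimp only; rw [dif_pos k.isLt]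
    rw [h1]
    exact sum_bound_aux n u s hrec
  -- Cauchy-Schwarz
  have hs0 : ∀ k, 0 ≤ s k := by
    intro k; rw [hs]; dsimp only; split <;> positivity
  have hnormz : ∑ k ∈ Finset.range n, s k ^ 2 = ‖z‖ ^ 2 := by
    rw [EuclideanSpace.norm_eq, Real.sq_sqrt (by positivity)]
    rw [Finset.sum_range fun k => s k ^ 2]
    refine Finset.sum_congr rfl fun k _ => ?_
    rw [hs]; dsimp only; rw [dif_pos k.isLt]
  have hgeom : ∑ k ∈ Finset.range n, ((2:ℝ) ^ (n - 1 - k)) ^ 2 = (4 ^ n - 1) / 3 := by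
    have : ∀ k, ((2:ℝ) ^ (n - 1 - k)) ^ 2 = 4 ^ (n - 1 - k) := by
      intro k
      rw [← pow_mul, pow_mul']
      norm_num
    simp_rw [this]
    rw [Finset.sum_range_reflect (fun k => (4:ℝ) ^ k) n]
    rw [geom_sum_eq (by norm_num : (4:ℝ) ≠ 1)]
    norm_num
  have hcs : ∑ k ∈ Finset.range n, 2 ^ (n - 1 - k) * s k
      ≤ Real.sqrt ((4 ^ n - 1) / 3) * ‖z‖ := by
    have hsq := Finset.sum_mul_sq_le_sq_mul_sq (Finset.range n)
      (fun k => (2:ℝ) ^ (n - 1 - k)) s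
    rw [hgeom, hnormz] at hsq
    have hlhs : 0 ≤ ∑ k ∈ Finset.range n, (2:ℝ) ^ (n - 1 - k) * s k :=
      Finset.sum_nonneg fun k _ => mul_nonneg (by positivity) (hs0 k)
    have hrhs : (0:ℝ) ≤ Real.sqrt ((4 ^ n - 1) / 3) * ‖z‖ :=
      mul_nonneg hc.le (norm_nonneg _)
    nlinarith [Real.sq_sqrt (show (0:ℝ) ≤ (4 ^ n - 1) / 3 by linarith),
      Real.sqrt_nonneg ((4 ^ n - 1) / 3), norm_nonneg z]
  -- conclude
  have hlt1 : ∑ j : Fin n, ‖w j‖ < 1 := by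
    have : Real.sqrt ((4 ^ n - 1) / 3) * ‖z‖ < 1 := by
      have := mul_lt_mul_of_pos_left hz' hc
      rwa [mul_one_div, div_self hc.ne'] at this
    linarith [htot.trans hcs]
  exact ⟨WithLp.toLp 2 w, hlt1, by show WithLp.toLp 2 (A.mulVec w) = z; rw [hAw]⟩
end
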